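/- Let G be a group, E a real Banach space, and λ : G → L(E,E) a unital pseudo-representation with b(λ) finite and c(λ) < 1. Then for all g, k ∈ G one has ‖λ(gk)∘λ(k)⁻¹‖ ≤ b(λ)/(1−c(λ)), where λ(k)⁻¹ denotes the inverse of the (invertible) operator λ(k). -/
import Mathlib


/-- The pointwise integrand estimate underlying the paper's inequality (5):
for a unital pseudo-representation with `b(λ)` finite and `c(λ) < 1`, the
"division cocycle" `λ(gk) ∘ λ(k)⁻¹` is bounded in norm by `b(λ)/(1 - c(λ))`. -/
theorem division_cocycle_bound
    {G : Type*} [Group G] {E : Type*} [NormedAddCommGroup E] [NormedSpace ℝ E]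
    [CompleteSpace E]
    (lam : G → E →L[ℝ] E)
    (hunital : lam 1 = ContinuousLinearMap.id ℝ E)
    (B : ℝ) (hB : ∀ h : G, ‖lam h‖ ≤ B)
    (C : ℝ) (hC : ∀ g' g : G, ‖lam (g' * g) - (lam g').comp (lam g)‖ ≤ C)
    (hC1 : C < 1) :
    ∀ g k : G, ∀ u : E ≃L[ℝ] E, lam k = u →
      ‖(lam (g * k)).comp (u.symm : E →L[ℝ] E)‖ ≤ B / (1 - C) := by
  intro g k u hu
  have h1C : (0:ℝ) < 1 - C := by linarith
  have hB0 : 0 ≤ B := le_trans (norm_nonneg _) (hB 1)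
  have hC0 : 0 ≤ C := le_trans (norm_nonneg _) (hC 1 1)
  apply ContinuousLinearMap.opNorm_le_bound _ (by positivity)
  intro x
  set y := u.symm x with hy
  have hky : lam k y = x := by rw [hu]; exact u.apply_symm_apply x
  have key : ∀ h : G, ‖lam (h * k) y‖ ≤ C * ‖y‖ + B * ‖x‖ := by
    intro h
    have hrw : lam (h * k) y = (lam (h * k) - (lam h).comp (lam k)) y + lam h x := by
      simp [ContinuousLinearMap.sub_apply, ContinuousLinearMap.comp_apply, hky]
    rw [hrw]
    refine le_trans (norm_add_le _ _) (add_le_add ?_ ?_)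
    · exact le_trans ((lam (h * k) - (lam h).comp (lam k)).le_opNorm y)
        (mul_le_mul_of_nonneg_right (hC h k) (norm_nonneg y))
    · exact le_trans ((lam h).le_opNorm x)
        (mul_le_mul_of_nonneg_right (hB h) (norm_nonneg x))
  have hyB : ‖y‖ ≤ B * ‖x‖ / (1 - C) := by
    have hk := key k⁻¹
    rw [inv_mul_cancel, hunital] at hk
    simp only [ContinuousLinearMap.id_apply] at hk
    rw [le_div_iff₀ h1C]
    nlinarith [norm_nonneg y]
  have hg := key g
  calc ‖(lam (g * k)).comp (u.symm : E →L[ℝ] E) x‖ = ‖lam (g * k) y‖ := rfl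
    _ ≤ C * ‖y‖ + B * ‖x‖ := hg
    _ ≤ C * (B * ‖x‖ / (1 - C)) + B * ‖x‖ := by
        exact add_le_add (mul_le_mul_of_nonneg_left hyB hC0) le_rfl
    _ = B / (1 - C) * ‖x‖ := by field_simp; ring
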